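/- For every adaptive pure strategy f of Team 1 and every pair (i,j) ∈ {1,…,m}×{1,…,T}, the probability that players i and j meet during the T rounds — i.e., that (a_k, b_k) = (i,j) for some 1 ≤ k ≤ T — is at most 1/T. -/

import Mathlib

/-- The history of the first `k` rounds of the competition, when Team 1 plays the
adaptive pure strategy `f` and Team 2's (random) selections and the (random) match
outcomes are given by `b : ℕ → Fin T` and `c : ℕ → Bool`.  An entry `(a, b, c)`
records Team 1's selection, Team 2's selection and the outcome of one round. -/
def histUpTo (m T : ℕ) (f : List (Fin m × Fin T × Bool) → Fin m)
    (b : ℕ → Fin T) (c : ℕ → Bool) : ℕ → List (Fin m × Fin T × Bool)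
  | 0 => []
  | k + 1 =>
      histUpTo m T f b c k ++
        [(f (histUpTo m T f b c k), b k, c k)]

/-- Team 1's selection in round `k+1` (0-indexed round `k`). -/
def apick (m T : ℕ) (f : List (Fin m × Fin T × Bool) → Fin m)
    (b : ℕ → Fin T) (c : ℕ → Bool) (k : ℕ) : Fin m :=
  f (histUpTo m T f b c k)

/-- Extend a function on `Fin T` to `ℕ` (by periodicity); only the values on
`{0, …, T-1}` are ever used. -/
def natify {β : Type*} {T : ℕ} (hT : 0 < T) (g : Fin T → β) : ℕ → β :=
  fun k => g ⟨k % T, Nat.mod_lt _ hT⟩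

namespace MeetAux

variable {m T : ℕ}

/-- weight of one round -/
def wgt (P : Fin m → Fin T → ℝ) (a : Fin m) (b : Fin T) (cb : Bool) : ℝ :=
  if cb then P a b else 1 - P a b

/-- product of weights along a continuation -/
def prodW (f : List (Fin m × Fin T × Bool) → Fin m) (P : Fin m → Fin T → ℝ) :
    List (Fin m × Fin T × Bool) → List (Fin T) → List Bool → ℝ
  | h, b :: bs, cb :: cs => wgt P (f h) b cb * prodW f P (h ++ [(f h, b, cb)]) bs cs
  | _, _, _ => 1

/-- weight of a continuation times the indicator that `i` meets `j` in it -/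
def runP (f : List (Fin m × Fin T × Bool) → Fin m) (P : Fin m → Fin T → ℝ)
    (i : Fin m) (j : Fin T) :
    List (Fin m × Fin T × Bool) → List (Fin T) → List Bool → ℝ
  | h, b :: bs, cb :: cs =>
      wgt P (f h) b cb *
        (if f h = i ∧ b = j then prodW f P (h ++ [(f h, b, cb)]) bs cs
         else runP f P i j (h ++ [(f h, b, cb)]) bs cs)
  | _, _, _ => 0

variable {f : List (Fin m × Fin T × Bool) → Fin m} {P : Fin m → Fin T → ℝ}
  {i : Fin m} {j : Fin T}

@[simp] lemma prodW_cons (h : List (Fin m × Fin T × Bool)) (b : Fin T) (bs : List (Fin T))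
    (cb : Bool) (cs : List Bool) :
    prodW f P h (b :: bs) (cb :: cs)
      = wgt P (f h) b cb * prodW f P (h ++ [(f h, b, cb)]) bs cs := rfl

@[simp] lemma runP_cons (h : List (Fin m × Fin T × Bool)) (b : Fin T) (bs : List (Fin T))
    (cb : Bool) (cs : List Bool) :
    runP f P i j h (b :: bs) (cb :: cs)
      = wgt P (f h) b cb *
        (if f h = i ∧ b = j then prodW f P (h ++ [(f h, b, cb)]) bs cs
         else runP f P i j (h ++ [(f h, b, cb)]) bs cs) := rfl

@[simp] lemma runP_nil (h : List (Fin m × Fin T × Bool)) (cs : List Bool) :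
    runP f P i j h [] cs = 0 := by cases cs <;> rfl

@[simp] lemma runP_nil' (h : List (Fin m × Fin T × Bool)) (bs : List (Fin T)) :
    runP f P i j h bs [] = 0 := by cases bs <;> rfl

@[simp] lemma prodW_nil (h : List (Fin m × Fin T × Bool)) (cs : List Bool) :
    prodW f P h [] cs = 1 := by cases cs <;> rfl

lemma wgt_nonneg (hP : ∀ i j, P i j ∈ Set.Icc (0 : ℝ) 1) (a : Fin m) (b : Fin T) (cb : Bool) :
    0 ≤ wgt P a b cb := by
  rcases hP a b with ⟨h0, h1⟩
  cases cb <;> simp [wgt] <;> linarith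

lemma sum_wgt (a : Fin m) (b : Fin T) : wgt P a b true + wgt P a b false = 1 := by
  simp [wgt]

/-- splitting a sum over boolean vectors -/
lemma sum_ofFn_succ (n : ℕ) (F : List Bool → ℝ) :
    ∑ cf : Fin (n + 1) → Bool, F (List.ofFn cf)
      = ∑ c0 : Bool, ∑ g : Fin n → Bool, F (c0 :: List.ofFn g) := by
  have h1 : ∑ cf : Fin (n + 1) → Bool, F (List.ofFn cf)
      = ∑ p : Bool × (Fin n → Bool), F (p.1 :: List.ofFn p.2) :=
    Fintype.sum_equiv (Fin.consEquiv fun _ => Bool).symm _ _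
      (fun cf => by simp [List.ofFn_succ, Fin.consEquiv]; rfl)
  rw [h1, Fintype.sum_prod_type]

lemma sum_prodW : ∀ (n : ℕ) (bs : List (Fin T)), bs.length = n →
    ∀ h : List (Fin m × Fin T × Bool),
    ∑ cf : Fin n → Bool, prodW f P h bs (List.ofFn cf) = 1 := by
  intro n
  induction n with
  | zero =>
      intro bs hbs h
      rw [List.length_eq_zero_iff] at hbs
      subst hbs
      simp
  | succ n ih =>
      intro bs hbs h
      cases bs with
      | nil => simp at hbs
      | cons b bs =>
          simp only [List.length_cons, Nat.add_right_cancel_iff] at hbs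
          rw [sum_ofFn_succ]
          have : ∀ c0 : Bool, ∑ g : Fin n → Bool, prodW f P h (b :: bs) (c0 :: List.ofFn g)
              = wgt P (f h) b c0 := by
            intro c0
            simp only [prodW_cons]
            rw [← Finset.mul_sum, ih bs hbs, mul_one]
          simp only [this]
          rw [Fintype.sum_bool, sum_wgt]

lemma runP_eq_zero_of_not_mem :
    ∀ (bs : List (Fin T)) (h : List (Fin m × Fin T × Bool)) (cs : List Bool),
      j ∉ bs → runP f P i j h bs cs = 0 := by
  intro bs
  induction bs with
  | nil => intro h cs _; simp
  | cons b bs ih =>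
      intro h cs hj
      cases cs with
      | nil => simp
      | cons cb cs =>
          have hbj : b ≠ j := fun hbj => hj (by simp [hbj])
          rw [runP_cons, if_neg (fun hc => hbj hc.2),
            ih _ _ (fun hmem => hj (List.mem_cons_of_mem _ hmem)), mul_zero]

lemma runP_eq_zero_of_used
    (hf : ∀ h : List (Fin m × Fin T × Bool), h.length < T →
      (h.map fun x => x.1).Nodup → (h.map fun x => x.2.1).Nodup →
      f h ∉ h.map fun x => x.1) :
    ∀ (bs : List (Fin T)) (h : List (Fin m × Fin T × Bool)) (cs : List Bool),
      h.length + bs.length ≤ T →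
      (h.map fun x => x.1).Nodup → (h.map fun x => x.2.1).Nodup →
      bs.Nodup → (∀ b ∈ bs, b ∉ h.map fun x => x.2.1) →
      i ∈ h.map (fun x => x.1) →
      runP f P i j h bs cs = 0 := by
  intro bs
  induction bs with
  | nil => intro h cs _ _ _ _ _ _; simp
  | cons b bs ih =>
      intro h cs hlen hNa hNb hnd hdisj hi
      cases cs with
      | nil => simp
      | cons cb cs =>
          have hhlen : h.length < T := by simp at hlen; omega
          have hfresh : f h ∉ h.map fun x => x.1 := hf h hhlen hNa hNb
          have hfi : f h ≠ i := fun hc => hfresh (hc ▸ hi)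
          rw [runP_cons, if_neg (fun hc => hfi hc.1)]
          rw [ih (h ++ [(f h, b, cb)]) cs ?_ ?_ ?_ ?_ ?_ ?_, mul_zero]
          · simp at hlen ⊢; omega
          · simp only [List.map_append, List.map_cons, List.map_nil]
            rw [List.nodup_append]
            refine ⟨hNa, List.nodup_singleton _, ?_⟩
            intro a ha _ hb rfl
            simp only [List.mem_singleton] at hb
            exact hfresh (hb ▸ ha)
          · simp only [List.map_append, List.map_cons, List.map_nil]
            rw [List.nodup_append]
            refine ⟨hNb, List.nodup_singleton _, ?_⟩
            intro a ha _ hb rfl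
            simp only [List.mem_singleton] at hb
            exact hdisj b (by simp) (hb ▸ ha)
          · exact (List.nodup_cons.mp hnd).2
          · intro b' hb'
            simp only [List.map_append, List.map_cons, List.map_nil, List.mem_append,
              List.mem_singleton]
            push_neg
            refine ⟨hdisj b' (List.mem_cons_of_mem _ hb'), ?_⟩
            intro hbb
            exact (List.nodup_cons.mp hnd).1 (hbb ▸ hb')
          · simp only [List.map_append, List.mem_append]
            exact Or.inl hi

/-- all orderings of a finset, as a finset of lists -/
noncomputable def permsFinset (s : Finset (Fin T)) : Finset (List (Fin T)) :=
  s.toList.permutations.toFinset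

lemma mem_permsFinset {s : Finset (Fin T)} {bs : List (Fin T)} :
    bs ∈ permsFinset s ↔ (bs : Multiset (Fin T)) = s.val := by
  rw [permsFinset, List.mem_toFinset, List.mem_permutations, ← Multiset.coe_eq_coe,
    Finset.coe_toList]

lemma card_permsFinset (s : Finset (Fin T)) :
    (permsFinset s).card = s.card.factorial := by
  rw [permsFinset, List.toFinset_card_of_nodup (List.nodup_permutations _ s.nodup_toList),
    List.length_permutations, Finset.length_toList]

lemma length_of_mem_permsFinset {s : Finset (Fin T)} {bs : List (Fin T)}
    (h : bs ∈ permsFinset s) : bs.length = s.card := by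
  rw [mem_permsFinset] at h
  have := congrArg Multiset.card h
  simpa using this

lemma nodup_of_mem_permsFinset {s : Finset (Fin T)} {bs : List (Fin T)}
    (h : bs ∈ permsFinset s) : bs.Nodup := by
  rw [mem_permsFinset] at h
  have : Multiset.Nodup (bs : Multiset (Fin T)) := h ▸ s.nodup
  simpa using this

lemma mem_iff_of_mem_permsFinset {s : Finset (Fin T)} {bs : List (Fin T)}
    (h : bs ∈ permsFinset s) {b : Fin T} : b ∈ bs ↔ b ∈ s := by
  rw [mem_permsFinset] at h
  rw [← Multiset.mem_coe, h]
  rfl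

lemma sum_permsFinset_cons (hT : 0 < T) (s : Finset (Fin T)) (hs : s.Nonempty)
    (F : List (Fin T) → ℝ) :
    ∑ bs ∈ permsFinset s, F bs
      = ∑ b ∈ s, ∑ bs ∈ permsFinset (s.erase b), F (b :: bs) := by
  haveI : Inhabited (Fin T) := ⟨⟨0, hT⟩⟩
  rw [Finset.sum_sigma']
  refine Finset.sum_nbij'
    (i := fun bs => (⟨bs.headI, bs.tail⟩ : Σ _ : Fin T, List (Fin T)))
    (j := fun x => x.1 :: x.2) ?_ ?_ ?_ ?_ ?_
  · intro bs hbs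
    have hne : bs ≠ [] := by
      intro hnil
      have := length_of_mem_permsFinset hbs
      rw [hnil] at this
      simp only [List.length_nil] at this
      exact absurd (this.symm ▸ hs.card_pos) (by omega)
    obtain ⟨b, l, rfl⟩ := List.exists_cons_of_ne_nil hne
    rw [mem_permsFinset] at hbs
    simp only [List.headI_cons, List.tail_cons, Finset.mem_sigma]
    constructor
    · rw [Finset.mem_def, ← hbs, Multiset.mem_coe]
      exact List.mem_cons_self
    · rw [mem_permsFinset, Finset.erase_val]
      rw [← hbs]
      simp [Multiset.erase_cons_head]
  · rintro ⟨b, bs⟩ hx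
    simp only [Finset.mem_sigma] at hx
    obtain ⟨hb, hbs⟩ := hx
    rw [mem_permsFinset] at hbs ⊢
    have : ((b :: bs : List (Fin T)) : Multiset (Fin T)) = b ::ₘ (bs : Multiset (Fin T)) := rfl
    rw [this, hbs, Finset.erase_val, Multiset.cons_erase (Finset.mem_def.mp hb)]
  · intro bs hbs
    have hne : bs ≠ [] := by
      intro hnil
      have := length_of_mem_permsFinset hbs
      rw [hnil] at this
      simp only [List.length_nil] at this
      exact absurd (this.symm ▸ hs.card_pos) (by omega)
    obtain ⟨b, l, rfl⟩ := List.exists_cons_of_ne_nil hne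
    simp
  · rintro ⟨b, bs⟩ _
    simp
  · intro bs hbs
    have hne : bs ≠ [] := by
      intro hnil
      have := length_of_mem_permsFinset hbs
      rw [hnil] at this
      simp only [List.length_nil] at this
      exact absurd (this.symm ▸ hs.card_pos) (by omega)
    obtain ⟨b, l, rfl⟩ := List.exists_cons_of_ne_nil hne
    simp

lemma main_bound (hT : 0 < T)
    (hP : ∀ i j, P i j ∈ Set.Icc (0 : ℝ) 1)
    (hf : ∀ h : List (Fin m × Fin T × Bool), h.length < T →
      (h.map fun x => x.1).Nodup → (h.map fun x => x.2.1).Nodup →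
      f h ∉ h.map fun x => x.1) :
    ∀ (r : ℕ) (s : Finset (Fin T)), s.card = r →
      ∀ h : List (Fin m × Fin T × Bool),
      h.length + r ≤ T →
      (h.map fun x => x.1).Nodup → (h.map fun x => x.2.1).Nodup →
      (∀ b ∈ s, b ∉ h.map fun x => x.2.1) →
      i ∉ h.map (fun x => x.1) → j ∈ s →
      ∑ bs ∈ permsFinset s, ∑ cf : Fin r → Bool, runP f P i j h bs (List.ofFn cf)
        ≤ ((r - 1).factorial : ℝ) := by
  intro r
  induction r with
  | zero =>
      intro s hs h _ _ _ _ _ hj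
      rw [Finset.card_eq_zero] at hs
      exact absurd hj (by simp [hs])
  | succ n ih =>
      intro s hs h hlen hNa hNb hdisj hi hj
      have hsne : s.Nonempty := ⟨j, hj⟩
      have hhlen : h.length < T := by omega
      have hfresh : f h ∉ h.map (fun x => x.1) := hf h hhlen hNa hNb
      have hNa' : ∀ (b : Fin T) (c0 : Bool),
          ((h ++ [(f h, b, c0)]).map fun x => x.1).Nodup := by
        intro b c0
        simp only [List.map_append, List.map_cons, List.map_nil]
        rw [List.nodup_append]
        refine ⟨hNa, List.nodup_singleton _, ?_⟩
        intro a ha _ hb rfl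
        simp only [List.mem_singleton] at hb
        exact hfresh (hb ▸ ha)
      have hNb' : ∀ b ∈ s, ∀ c0 : Bool,
          ((h ++ [(f h, b, c0)]).map fun x => x.2.1).Nodup := by
        intro b hb c0
        simp only [List.map_append, List.map_cons, List.map_nil]
        rw [List.nodup_append]
        refine ⟨hNb, List.nodup_singleton _, ?_⟩
        intro a ha _ hab rfl
        simp only [List.mem_singleton] at hab
        exact hdisj b hb (hab ▸ ha)
      have hlen' : ∀ (b : Fin T) (c0 : Bool), (h ++ [(f h, b, c0)]).length + n ≤ T := by
        intro b c0; simp only [List.length_append, List.length_cons, List.length_nil]; omega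
      have hdisj' : ∀ b ∈ s, ∀ c0 : Bool, ∀ b' ∈ s.erase b,
          b' ∉ (h ++ [(f h, b, c0)]).map fun x => x.2.1 := by
        intro b hb c0 b' hb'
        simp only [List.map_append, List.map_cons, List.map_nil, List.mem_append,
          List.mem_singleton]
        push_neg
        exact ⟨hdisj b' (Finset.mem_of_mem_erase hb'), Finset.ne_of_mem_erase hb'⟩
      have hcarderase : ∀ b ∈ s, (s.erase b).card = n := by
        intro b hb; rw [Finset.card_erase_of_mem hb, hs]; rfl
      rw [sum_permsFinset_cons hT s hsne]
      simp only [sum_ofFn_succ]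
      rw [← Finset.add_sum_erase s _ hj]
      by_cases hfi : f h = i
      · -- f h = i : only the b = j term contributes, and it equals n!
        have hz : ∑ b ∈ s.erase j, ∑ bs' ∈ permsFinset (s.erase b),
            ∑ c0 : Bool, ∑ g : Fin n → Bool,
              runP f P i j h (b :: bs') (c0 :: List.ofFn g) = 0 := by
          apply Finset.sum_eq_zero; intro b hb
          apply Finset.sum_eq_zero; intro bs' hbs'
          apply Finset.sum_eq_zero; intro c0 _
          apply Finset.sum_eq_zero; intro g _
          have hbj : b ≠ j := Finset.ne_of_mem_erase hb
          have hbmem : b ∈ s := Finset.mem_of_mem_erase hb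
          rw [runP_cons, if_neg (fun hc => hbj hc.2)]
          rw [runP_eq_zero_of_used hf bs' _ (List.ofFn g) ?_ ?_ ?_ ?_ ?_ ?_, mul_zero]
          · rw [length_of_mem_permsFinset hbs', hcarderase b hbmem]
            exact hlen' b c0
          · exact hNa' b c0
          · exact hNb' b hbmem c0
          · exact nodup_of_mem_permsFinset hbs'
          · intro b' hb'
            exact hdisj' b hbmem c0 b'
              (((mem_iff_of_mem_permsFinset hbs').mp hb'))
          · simp only [List.map_append, List.map_cons, List.map_nil, List.mem_append,
              List.mem_singleton]
            exact Or.inr hfi.symm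
        have hjterm : ∑ bs' ∈ permsFinset (s.erase j),
            ∑ c0 : Bool, ∑ g : Fin n → Bool,
              runP f P i j h (j :: bs') (c0 :: List.ofFn g) = (n.factorial : ℝ) := by
          have hone : ∀ bs' ∈ permsFinset (s.erase j),
              ∑ c0 : Bool, ∑ g : Fin n → Bool,
                runP f P i j h (j :: bs') (c0 :: List.ofFn g) = 1 := by
            intro bs' hbs'
            have hblen : bs'.length = n := by
              rw [length_of_mem_permsFinset hbs', hcarderase j hj]
            have : ∀ c0 : Bool, ∑ g : Fin n → Bool,
                runP f P i j h (j :: bs') (c0 :: List.ofFn g) = wgt P (f h) j c0 := by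
              intro c0
              simp only [runP_cons]
              have heq : ∀ g : Fin n → Bool,
                  wgt P (f h) j c0 *
                      (if f h = i ∧ True then
                        prodW f P (h ++ [(f h, j, c0)]) bs' (List.ofFn g)
                      else runP f P i j (h ++ [(f h, j, c0)]) bs' (List.ofFn g))
                    = wgt P (f h) j c0 * prodW f P (h ++ [(f h, j, c0)]) bs' (List.ofFn g) := by
                intro g; rw [if_pos ⟨hfi, trivial⟩]
              rw [Finset.sum_congr rfl fun g _ => heq g, ← Finset.mul_sum,
                sum_prodW n bs' hblen, mul_one]
            simp only [this]
            rw [Fintype.sum_bool, sum_wgt]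
          rw [Finset.sum_congr rfl hone, Finset.sum_const, card_permsFinset,
            hcarderase j hj, nsmul_eq_mul, mul_one]
        rw [hz, hjterm, add_zero]
        simp
      · -- f h ≠ i : the b = j term vanishes, the others are bounded via the IH
        have hjterm : ∑ bs' ∈ permsFinset (s.erase j),
            ∑ c0 : Bool, ∑ g : Fin n → Bool,
              runP f P i j h (j :: bs') (c0 :: List.ofFn g) = 0 := by
          apply Finset.sum_eq_zero; intro bs' hbs'
          apply Finset.sum_eq_zero; intro c0 _
          apply Finset.sum_eq_zero; intro g _
          have hjbs' : j ∉ bs' := by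
            rw [mem_iff_of_mem_permsFinset hbs']
            exact Finset.notMem_erase j s
          rw [runP_cons, if_neg (fun hc => hfi hc.1),
            runP_eq_zero_of_not_mem bs' _ (List.ofFn g) hjbs', mul_zero]
        have hbterm : ∀ b ∈ s.erase j,
            ∑ bs' ∈ permsFinset (s.erase b), ∑ c0 : Bool, ∑ g : Fin n → Bool,
              runP f P i j h (b :: bs') (c0 :: List.ofFn g)
            ≤ ((n - 1).factorial : ℝ) := by
          intro b hb
          have hbj : b ≠ j := Finset.ne_of_mem_erase hb
          have hbmem : b ∈ s := Finset.mem_of_mem_erase hb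
          have step1 : ∀ bs' ∈ permsFinset (s.erase b), ∀ c0 : Bool,
              ∀ g : Fin n → Bool,
              runP f P i j h (b :: bs') (c0 :: List.ofFn g)
                = wgt P (f h) b c0 *
                    runP f P i j (h ++ [(f h, b, c0)]) bs' (List.ofFn g) := by
            intro bs' _ c0 g
            rw [runP_cons, if_neg (fun hc => hfi hc.1)]
          rw [Finset.sum_congr rfl (fun bs' hbs' => by
            exact Finset.sum_congr rfl (fun c0 _ =>
              Finset.sum_congr rfl (fun g _ => step1 bs' hbs' c0 g)))]
          rw [Finset.sum_comm]
          have inner_le : ∀ c0 : Bool,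
              ∑ bs' ∈ permsFinset (s.erase b), ∑ g : Fin n → Bool,
                wgt P (f h) b c0 *
                  runP f P i j (h ++ [(f h, b, c0)]) bs' (List.ofFn g)
              ≤ wgt P (f h) b c0 * ((n - 1).factorial : ℝ) := by
            intro c0
            simp only [← Finset.mul_sum]
            apply mul_le_mul_of_nonneg_left _ (wgt_nonneg hP _ _ _)
            refine ih (s.erase b) (hcarderase b hbmem) (h ++ [(f h, b, c0)])
              (hlen' b c0) (hNa' b c0) (hNb' b hbmem c0) (hdisj' b hbmem c0) ?_ ?_
            · simp only [List.map_append, List.map_cons, List.map_nil, List.mem_append,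
                List.mem_singleton]
              push_neg
              exact ⟨hi, fun hc => hfi hc.symm⟩
            · exact Finset.mem_erase.mpr ⟨fun hc => hbj hc.symm, hj⟩
          calc ∑ c0 : Bool, ∑ bs' ∈ permsFinset (s.erase b), ∑ g : Fin n → Bool,
                wgt P (f h) b c0 *
                  runP f P i j (h ++ [(f h, b, c0)]) bs' (List.ofFn g)
              ≤ ∑ c0 : Bool, wgt P (f h) b c0 * ((n - 1).factorial : ℝ) :=
                Finset.sum_le_sum (fun c0 _ => inner_le c0)
            _ = ((n - 1).factorial : ℝ) := by
                rw [Fintype.sum_bool, ← add_mul, sum_wgt, one_mul]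
        have hfinal : ∑ b ∈ s.erase j, ∑ bs' ∈ permsFinset (s.erase b),
            ∑ c0 : Bool, ∑ g : Fin n → Bool,
              runP f P i j h (b :: bs') (c0 :: List.ofFn g)
            ≤ (n : ℝ) * ((n - 1).factorial : ℝ) := by
          calc _ ≤ ∑ _b ∈ s.erase j, ((n - 1).factorial : ℝ) :=
                Finset.sum_le_sum hbterm
            _ = (n : ℝ) * ((n - 1).factorial : ℝ) := by
                rw [Finset.sum_const, hcarderase j hj, nsmul_eq_mul]
        rw [hjterm, zero_add]
        refine hfinal.trans ?_
        have hnat : n * (n - 1).factorial ≤ n.factorial := by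
          cases n with
          | zero => simp
          | succ k => simp [Nat.factorial_succ]
        calc (n : ℝ) * ((n - 1).factorial : ℝ) = ((n * (n - 1).factorial : ℕ) : ℝ) := by
              push_cast; ring
          _ ≤ (n.factorial : ℝ) := by exact_mod_cast hnat
          _ = (((n + 1) - 1).factorial : ℝ) := by simp

lemma claimD (hT : 0 < T) (β : Fin T → Fin T) (c : Fin T → Bool) :
    ∀ d k, k + d = T →
      prodW f P (histUpTo m T f (natify hT β) (natify hT c) k)
          ((List.ofFn β).drop k) ((List.ofFn c).drop k)
        = ((List.ofFn (fun p : Fin T =>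
            wgt P (apick m T f (natify hT β) (natify hT c) ↑p) (β p) (c p))).drop k).prod := by
  intro d
  induction d with
  | zero =>
      intro k hk
      have hTk : T ≤ k := by omega
      rw [List.drop_eq_nil_of_le (by simpa using hTk),
        List.drop_eq_nil_of_le (by simpa using hTk),
        List.drop_eq_nil_of_le (by simpa using hTk)]
      simp
  | succ d ihd =>
      intro k hk
      have hkT : k < T := by omega
      have edrop : ∀ {α : Type} (g : Fin T → α),
          (List.ofFn g).drop k = g ⟨k, hkT⟩ :: (List.ofFn g).drop (k + 1) := by
        intro α g
        rw [List.drop_eq_getElem_cons (by simpa using hkT)]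
        congr 1
        simp [List.getElem_ofFn]
      have hb : natify hT β k = β ⟨k, hkT⟩ := by
        simp only [natify]; congr 1; exact Fin.ext (Nat.mod_eq_of_lt hkT)
      have hc : natify hT c k = c ⟨k, hkT⟩ := by
        simp only [natify]; congr 1; exact Fin.ext (Nat.mod_eq_of_lt hkT)
      rw [edrop β, edrop c,
        edrop (fun p : Fin T =>
          wgt P (apick m T f (natify hT β) (natify hT c) ↑p) (β p) (c p)),
        prodW_cons, List.prod_cons]
      have hsucc : histUpTo m T f (natify hT β) (natify hT c) k ++
          [(f (histUpTo m T f (natify hT β) (natify hT c) k), β ⟨k, hkT⟩, c ⟨k, hkT⟩)]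
          = histUpTo m T f (natify hT β) (natify hT c) (k + 1) := by
        rw [← hb, ← hc]; rfl
      rw [hsucc, ihd (k + 1) (by omega)]
      rfl

lemma claimC (hT : 0 < T) (β : Fin T → Fin T) (c : Fin T → Bool) :
    ∀ d k, k + d = T →
      runP f P i j (histUpTo m T f (natify hT β) (natify hT c) k)
          ((List.ofFn β).drop k) ((List.ofFn c).drop k)
        = if (∃ p : Fin T, k ≤ ↑p ∧
              apick m T f (natify hT β) (natify hT c) ↑p = i ∧ β p = j) then
            ((List.ofFn (fun p : Fin T =>
              wgt P (apick m T f (natify hT β) (natify hT c) ↑p) (β p) (c p))).drop k).prod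
          else 0 := by
  intro d
  induction d with
  | zero =>
      intro k hk
      have hTk : T ≤ k := by omega
      rw [List.drop_eq_nil_of_le (by simpa using hTk),
        List.drop_eq_nil_of_le (by simpa using hTk)]
      rw [if_neg ?_]
      · simp
      · rintro ⟨p, hp, -⟩
        have := p.isLt
        omega
  | succ d ihd =>
      intro k hk
      have hkT : k < T := by omega
      have edrop : ∀ {α : Type} (g : Fin T → α),
          (List.ofFn g).drop k = g ⟨k, hkT⟩ :: (List.ofFn g).drop (k + 1) := by
        intro α g
        rw [List.drop_eq_getElem_cons (by simpa using hkT)]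
        congr 1
        simp [List.getElem_ofFn]
      have hb : natify hT β k = β ⟨k, hkT⟩ := by
        simp only [natify]; congr 1; exact Fin.ext (Nat.mod_eq_of_lt hkT)
      have hc : natify hT c k = c ⟨k, hkT⟩ := by
        simp only [natify]; congr 1; exact Fin.ext (Nat.mod_eq_of_lt hkT)
      rw [edrop β, edrop c, runP_cons]
      have hsucc : histUpTo m T f (natify hT β) (natify hT c) k ++
          [(f (histUpTo m T f (natify hT β) (natify hT c) k), β ⟨k, hkT⟩, c ⟨k, hkT⟩)]
          = histUpTo m T f (natify hT β) (natify hT c) (k + 1) := by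
        rw [← hb, ← hc]; rfl
      have hfk : f (histUpTo m T f (natify hT β) (natify hT c) k)
          = apick m T f (natify hT β) (natify hT c) ↑(⟨k, hkT⟩ : Fin T) := rfl
      by_cases hQ : f (histUpTo m T f (natify hT β) (natify hT c) k) = i ∧ β ⟨k, hkT⟩ = j
      · rw [if_pos hQ, hsucc, claimD hT β c d (k + 1) (by omega)]
        rw [if_pos (⟨⟨k, hkT⟩, le_refl _, hQ.1, hQ.2⟩ : ∃ p : Fin T, k ≤ ↑p ∧
          apick m T f (natify hT β) (natify hT c) ↑p = i ∧ β p = j)]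
        rw [edrop (fun p : Fin T =>
          wgt P (apick m T f (natify hT β) (natify hT c) ↑p) (β p) (c p)), List.prod_cons]
        rfl
      · rw [if_neg hQ, hsucc, ihd (k + 1) (by omega)]
        have hiff : (∃ p : Fin T, k ≤ ↑p ∧
              apick m T f (natify hT β) (natify hT c) ↑p = i ∧ β p = j)
            ↔ (∃ p : Fin T, k + 1 ≤ ↑p ∧
              apick m T f (natify hT β) (natify hT c) ↑p = i ∧ β p = j) := by
          constructor
          · rintro ⟨p, hp, hQ1, hQ2⟩
            rcases Nat.lt_or_ge k ↑p with hlt | hge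
            · exact ⟨p, hlt, hQ1, hQ2⟩
            · exfalso
              have hpk : p = (⟨k, hkT⟩ : Fin T) := Fin.ext (by simp; omega)
              rw [hpk] at hQ1 hQ2
              exact hQ ⟨hQ1, hQ2⟩
          · rintro ⟨p, hp, hQ1, hQ2⟩
            exact ⟨p, by omega, hQ1, hQ2⟩
        by_cases hE : ∃ p : Fin T, k + 1 ≤ ↑p ∧
            apick m T f (natify hT β) (natify hT c) ↑p = i ∧ β p = j
        · rw [if_pos hE, if_pos (hiff.mpr hE)]
          rw [edrop (fun p : Fin T =>
            wgt P (apick m T f (natify hT β) (natify hT c) ↑p) (β p) (c p)), List.prod_cons]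
          rfl
        · rw [if_neg hE, if_neg (fun hx => hE (hiff.mp hx)), mul_zero]

lemma sum_perm_eq (hT : 0 < T) (G : List (Fin T) → ℝ) :
    ∑ β : Equiv.Perm (Fin T), G (List.ofFn ⇑β)
      = ∑ bs ∈ permsFinset (Finset.univ : Finset (Fin T)), G bs := by
  refine Finset.sum_bij (fun β _ => List.ofFn ⇑β) ?_ ?_ ?_ ?_
  · intro β _
    rw [mem_permsFinset]
    have hnd : (List.ofFn ⇑β).Nodup := List.nodup_ofFn.mpr β.injective
    have : (List.ofFn ⇑β).toFinset = (Finset.univ : Finset (Fin T)) := by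
      apply Finset.eq_univ_of_forall
      intro x
      rw [List.mem_toFinset, List.mem_ofFn]
      exact ⟨β.symm x, β.apply_symm_apply x⟩
    rw [← this]
    rw [List.toFinset, Multiset.toFinset]
    simp [hnd.dedup]
  · intro β1 _ β2 _ hofn
    have := List.ofFn_injective hofn
    exact Equiv.coe_inj.mp this
  · intro bs hbs
    have hbsm := mem_permsFinset.mp hbs
    have hlenT : bs.length = T := by
      have := congrArg Multiset.card hbsm
      simpa using this
    have hnd : bs.Nodup := nodup_of_mem_permsFinset hbs
    have hinj : Function.Injective (fun k : Fin T => bs.get (Fin.cast hlenT.symm k)) := by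
      intro a b hab
      have := List.nodup_iff_injective_get.mp hnd hab
      simpa [Fin.ext_iff] using this
    have hbij := Finite.injective_iff_bijective.mp hinj
    refine ⟨Equiv.ofBijective _ hbij, Finset.mem_univ _, ?_⟩
    apply List.ext_getElem (by simpa using hlenT.symm)
    intro n h1 h2
    simp [List.getElem_ofFn, Equiv.ofBijective_apply, List.get_eq_getElem]
  · intro β _
    rfl

end MeetAux

/-- Suppose Team 2 (with exactly `n = T` players) selects its player
uniformly at random among the remaining ones in every round (encoded by a uniformly
random order `β` of its `T` players, each order having probability `1/T!`), while
Team 1 plays an arbitrary adaptive pure strategy `f` (which never reuses a player on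
any valid history).  Then for every pair of players `(i, j)`, the probability that
`i` and `j` meet during the `T` rounds is at most `1/T`. -/


theorem meeting_prob_le (m T : ℕ) (hT : 0 < T) (hm : T ≤ m)
    (P : Fin m → Fin T → ℝ) (hP : ∀ i j, P i j ∈ Set.Icc (0 : ℝ) 1)
    (f : List (Fin m × Fin T × Bool) → Fin m)
    (hf : ∀ h : List (Fin m × Fin T × Bool), h.length < T →
      (h.map fun x => x.1).Nodup → (h.map fun x => x.2.1).Nodup →
      f h ∉ h.map fun x => x.1)
    (i : Fin m) (j : Fin T) :
    ∑ β : Equiv.Perm (Fin T), ∑ c : Fin T → Bool,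
      (if ∃ k : Fin T,
            apick m T f (natify hT β) (natify hT c) k = i ∧ β k = j then
        (T.factorial : ℝ)⁻¹ *
          ∏ k : Fin T,
            (if c k then
              P (apick m T f (natify hT β) (natify hT c) k) (β k)
            else
              1 - P (apick m T f (natify hT β) (natify hT c) k) (β k))
      else 0) ≤ (T : ℝ)⁻¹ := by
  classical
  have key : ∀ (β : Equiv.Perm (Fin T)) (c : Fin T → Bool),
      (if ∃ k : Fin T, apick m T f (natify hT ⇑β) (natify hT c) ↑k = i ∧ β k = j then
        ∏ k : Fin T,
          (if c k then P (apick m T f (natify hT ⇑β) (natify hT c) ↑k) (β k)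
           else 1 - P (apick m T f (natify hT ⇑β) (natify hT c) ↑k) (β k))
      else 0)
      = MeetAux.runP f P i j [] (List.ofFn ⇑β) (List.ofFn c) := by
    intro β c
    have h0 := MeetAux.claimC (f := f) (P := P) (i := i) (j := j) hT ⇑β c T 0 (by omega)
    rw [List.drop_zero, List.drop_zero, List.drop_zero] at h0
    rw [show histUpTo m T f (natify hT ⇑β) (natify hT c) 0 = [] from rfl] at h0
    rw [h0]
    refine if_congr ?_ ?_ rfl
    · constructor
      · rintro ⟨p, hp1, hp2⟩; exact ⟨p, Nat.zero_le _, hp1, hp2⟩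
      · rintro ⟨p, _, hp1, hp2⟩; exact ⟨p, hp1, hp2⟩
    · rw [List.prod_ofFn]
      rfl
  have main := MeetAux.main_bound (f := f) (P := P) (i := i) (j := j) hT hP hf T
    Finset.univ (by simp) [] (by simp) (by simp) (by simp) (by simp) (by simp)
    (Finset.mem_univ j)
  have heq : (∑ β : Equiv.Perm (Fin T), ∑ c : Fin T → Bool,
      (if ∃ k : Fin T,
            apick m T f (natify hT β) (natify hT c) k = i ∧ β k = j then
        (T.factorial : ℝ)⁻¹ *
          ∏ k : Fin T,
            (if c k then
              P (apick m T f (natify hT β) (natify hT c) k) (β k)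
            else
              1 - P (apick m T f (natify hT β) (natify hT c) k) (β k))
      else 0))
      = (T.factorial : ℝ)⁻¹ * ∑ bs ∈ MeetAux.permsFinset (Finset.univ : Finset (Fin T)),
          ∑ cf : Fin T → Bool, MeetAux.runP f P i j [] bs (List.ofFn cf) := by
    rw [← MeetAux.sum_perm_eq hT
      (fun bs => ∑ cf : Fin T → Bool, MeetAux.runP f P i j [] bs (List.ofFn cf))]
    rw [Finset.mul_sum]
    apply Finset.sum_congr rfl; intro β _
    rw [Finset.mul_sum]
    apply Finset.sum_congr rfl; intro c _
    rw [← key β c]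
    split_ifs with h
    · rfl
    · rw [mul_zero]
  rw [heq]
  have hTfacpos : (0 : ℝ) < (T.factorial : ℝ) := by
    exact_mod_cast T.factorial_pos
  calc (T.factorial : ℝ)⁻¹ * ∑ bs ∈ MeetAux.permsFinset (Finset.univ : Finset (Fin T)),
          ∑ cf : Fin T → Bool, MeetAux.runP f P i j [] bs (List.ofFn cf)
      ≤ (T.factorial : ℝ)⁻¹ * ((T - 1).factorial : ℝ) :=
        mul_le_mul_of_nonneg_left main (by positivity)
    _ = (T : ℝ)⁻¹ := by
        obtain ⟨n, rfl⟩ : ∃ n, T = n + 1 := ⟨T - 1, by omega⟩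
        have hfac : ((n + 1).factorial : ℝ) = ((n : ℝ) + 1) * (n.factorial : ℝ) := by
          rw [Nat.factorial_succ]; push_cast; ring
        rw [show n + 1 - 1 = n from rfl, hfac, mul_inv, mul_assoc,
          inv_mul_cancel₀ (by positivity : (n.factorial : ℝ) ≠ 0), mul_one]
        push_cast
        ring
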